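/- Let P be a finite nonempty set. Let I and S be finite index sets, where each e ∈ I carries a real c_e > 0 and a nonempty subset I_e ⊆ P, and each e ∈ S carries a real c_e > 0 and a nonempty subset S_e ⊆ P. For each linear order π on P define c(π) ∈ ℝ^P by c(π)_v := Σ_{e∈I : v is the π-minimum of I_e} c_e − Σ_{e∈S : v is the π-maximum of S_e} c_e. Suppose C ∈ ℝ^P satisfies Σ_{v∈P} C_v = Σ_{e∈I} c_e − Σ_{e∈S} c_e, and for every nonempty subset Y ⊆ P: Σ_{e∈I : I_e⊆Y} c_e − Σ_{e∈S : S_e∩Y≠∅} c_e ≤ Σ_{v∈Y} C_v ≤ Σ_{e∈I : I_e∩Y≠∅} c_e − Σ_{e∈S : S_e⊆Y} c_e. Then C lies in the convex hull of the finite set { c(π) : π is a linear order on P } ⊆ ℝ^P. -/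

import Mathlib

open Finset
open scoped Classical

noncomputable section


/-- Key inequality: level-set decomposition of a weight vector. -/
lemma key_ineq {P I S : Type} [Fintype P] [DecidableEq P] [Nonempty P] [Fintype I] [Fintype S]
    (cI : I → ℝ) (Ie : I → Finset P) (hIe : ∀ e, (Ie e).Nonempty)
    (cS : S → ℝ) (Se : S → Finset P) (hSe : ∀ e, (Se e).Nonempty)
    (C : P → ℝ)
    (hsum : ∑ v : P, C v = (∑ e : I, cI e) - ∑ e : S, cS e)
    (hlow : ∀ Y : Finset P, Y.Nonempty →
      (∑ e ∈ Finset.univ.filter (fun e : I => Ie e ⊆ Y), cI e)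
        - (∑ e ∈ Finset.univ.filter (fun e : S => (Se e ∩ Y).Nonempty), cS e)
        ≤ ∑ v ∈ Y, C v) :
    ∀ (n : ℕ) (w : P → ℝ), (Finset.univ.image w).card ≤ n →
      (∑ e : I, cI e * (Ie e).inf' (hIe e) w) - (∑ e : S, cS e * (Se e).sup' (hSe e) w)
        ≤ ∑ v : P, w v * C v := by
  intro n
  induction n with
  | zero =>
    intro w hw
    exact absurd hw (by
      simp only [Nat.le_zero, Finset.card_eq_zero, Finset.image_eq_empty, Finset.univ_eq_empty_iff]
      exact fun h => (h.false (Classical.arbitrary P)))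
  | succ n IH =>
    intro w hw
    by_cases hconst : ∀ v u : P, w v = w u
    · -- constant case
      set t := w (Classical.arbitrary P) with ht
      have hwv : ∀ v, w v = t := fun v => hconst v _
      have hinf : ∀ e : I, (Ie e).inf' (hIe e) w = t := by
        intro e
        obtain ⟨a, ha, hae⟩ := Finset.exists_mem_eq_inf' (hIe e) w
        rw [hae, hwv a]
      have hsup : ∀ e : S, (Se e).sup' (hSe e) w = t := by
        intro e
        obtain ⟨a, ha, hae⟩ := Finset.exists_mem_eq_sup' (hSe e) w
        rw [hae, hwv a]
      have : ∑ v : P, w v * C v = t * ∑ v : P, C v := by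
        rw [Finset.mul_sum]; exact Finset.sum_congr rfl fun v _ => by rw [hwv v]
      rw [this, hsum]
      simp only [hinf, hsup]
      rw [← Finset.sum_mul, ← Finset.sum_mul]
      ring_nf
      exact le_refl _
    · push_neg at hconst
      obtain ⟨u₀, v₀, huv⟩ := hconst
      have huniv : (Finset.univ : Finset P).Nonempty := Finset.univ_nonempty
      set M := Finset.univ.sup' huniv w with hM
      have hwleM : ∀ v : P, w v ≤ M := fun v => Finset.le_sup' w (Finset.mem_univ v)
      set Y : Finset P := Finset.univ.filter (fun v => w v = M) with hY
      obtain ⟨a, _, haM⟩ := Finset.exists_mem_eq_sup' huniv w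
      have haY : a ∈ Y := by simp [hY, haM.symm]; exact hM.symm
      have hYne : Y.Nonempty := ⟨a, haY⟩
      have hYc : ∃ v : P, w v ≠ M := by
        by_contra h
        push_neg at h
        exact huv ((h u₀).trans (h v₀).symm)
      set Yc : Finset P := Finset.univ.filter (fun v => w v ≠ M) with hYcdef
      have hYcne : Yc.Nonempty := by
        obtain ⟨v, hv⟩ := hYc
        exact ⟨v, by simp [hYcdef, hv]⟩
      set t' := Yc.sup' hYcne w with ht'
      obtain ⟨b, hb, hbt⟩ := Finset.exists_mem_eq_sup' hYcne w
      have hbM : w b ≠ M := (Finset.mem_filter.1 hb).2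
      have ht'M : t' < M := by
        rw [ht', hbt]
        exact lt_of_le_of_ne (hwleM b) hbM
      have hle_t' : ∀ v : P, w v ≠ M → w v ≤ t' :=
        fun v hv => Finset.le_sup' w (by simp [hYcdef, hv])
      set w' : P → ℝ := fun v => if w v = M then t' else w v with hw'
      -- cardinality decreases
      have hcard : (Finset.univ.image w').card ≤ n := by
        have hsub : Finset.univ.image w' ⊆ (Finset.univ.image w).erase M := by
          intro x hx
          obtain ⟨v, _, hv⟩ := Finset.mem_image.1 hx
          by_cases h : w v = M
          · have : x = t' := by rw [← hv]; simp [hw', h]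
            subst this
            exact Finset.mem_erase.2 ⟨ne_of_lt ht'M, by rw [ht', hbt]; exact Finset.mem_image_of_mem w (Finset.mem_univ b)⟩
          · have : x = w v := by rw [← hv]; simp [hw', h]
            subst this
            exact Finset.mem_erase.2 ⟨h, Finset.mem_image_of_mem w (Finset.mem_univ v)⟩
        have hMmem : M ∈ Finset.univ.image w := by
          rw [hM, haM]; exact Finset.mem_image_of_mem w (Finset.mem_univ a)
        calc (Finset.univ.image w').card ≤ ((Finset.univ.image w).erase M).card :=
              Finset.card_le_card hsub
          _ = (Finset.univ.image w).card - 1 := Finset.card_erase_of_mem hMmem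
          _ ≤ n := by omega
      have hwdec : ∀ v : P, w v = w' v + (M - t') * (if v ∈ Y then 1 else 0) := by
        intro v
        by_cases h : w v = M
        · simp [hw', hY, h]
        · simp [hw', hY, h]
      have hw'le : ∀ v : P, w' v ≤ w v := by
        intro v
        by_cases h : w v = M
        · simp only [hw', if_pos h, h]; exact le_of_lt ht'M
        · simp [hw', h]
      -- inf' relation
      have hinf : ∀ e : I, (Ie e).inf' (hIe e) w
          = (Ie e).inf' (hIe e) w' + (M - t') * (if Ie e ⊆ Y then 1 else 0) := by
        intro e
        by_cases h : Ie e ⊆ Y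
        · have h1 : (Ie e).inf' (hIe e) w = M := by
            obtain ⟨m, hm, hme⟩ := Finset.exists_mem_eq_inf' (hIe e) w
            rw [hme]
            exact (Finset.mem_filter.1 (h hm)).2
          have h2 : (Ie e).inf' (hIe e) w' = t' := by
            obtain ⟨m, hm, hme⟩ := Finset.exists_mem_eq_inf' (hIe e) w'
            rw [hme]
            have := (Finset.mem_filter.1 (h hm)).2
            simp [hw', this]
          rw [h1, h2, if_pos h]; ring
        · rw [if_neg h]
          obtain ⟨x, hxI, hxY⟩ := Finset.not_subset.1 h
          have hxM : w x ≠ M := fun hc => hxY (by simp [hY, hc])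
          have heq : (Ie e).inf' (hIe e) w' = (Ie e).inf' (hIe e) w := by
            apply le_antisymm
            · obtain ⟨m, hm, hme⟩ := Finset.exists_mem_eq_inf' (hIe e) w
              rw [hme]
              exact le_trans (Finset.inf'_le w' hm) (hw'le m)
            · obtain ⟨m, hm, hme⟩ := Finset.exists_mem_eq_inf' (hIe e) w'
              rw [hme]
              by_cases hmM : w m = M
              · have : w' m = t' := by simp [hw', hmM]
                rw [this]
                calc (Ie e).inf' (hIe e) w ≤ w x := Finset.inf'_le w hxI
                  _ ≤ t' := hle_t' x hxM
              · have : w' m = w m := by simp [hw', hmM]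
                rw [this]
                exact Finset.inf'_le w hm
          rw [heq]; ring
      -- sup' relation
      have hsup : ∀ e : S, (Se e).sup' (hSe e) w
          = (Se e).sup' (hSe e) w' + (M - t') * (if (Se e ∩ Y).Nonempty then 1 else 0) := by
        intro e
        by_cases h : (Se e ∩ Y).Nonempty
        · obtain ⟨y, hy⟩ := h
          have hyS : y ∈ Se e := (Finset.mem_inter.1 hy).1
          have hyM : w y = M := (Finset.mem_filter.1 (Finset.mem_inter.1 hy).2).2
          have h1 : (Se e).sup' (hSe e) w = M := by
            apply le_antisymm
            · exact Finset.sup'_le _ w fun v _ => hwleM v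
            · rw [← hyM]; exact Finset.le_sup' w hyS
          have h2 : (Se e).sup' (hSe e) w' = t' := by
            apply le_antisymm
            · apply Finset.sup'_le _ w'
              intro v _
              by_cases hv : w v = M
              · simp [hw', hv]
              · simp only [hw', if_neg hv]; exact hle_t' v hv
            · have : w' y = t' := by simp [hw', hyM]
              rw [← this]; exact Finset.le_sup' w' hyS
          rw [h1, h2, if_pos ⟨y, hy⟩]; ring
        · rw [if_neg h]
          have heq : (Se e).sup' (hSe e) w' = (Se e).sup' (hSe e) w := by
            apply Finset.sup'_congr _ rfl
            intro v hv
            have : w v ≠ M := by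
              intro hc
              exact h ⟨v, Finset.mem_inter.2 ⟨hv, by simp [hY, hc]⟩⟩
            simp [hw', this]
          rw [heq]; ring
      -- decomposition of sums
      have hsumw : ∑ v : P, w v * C v
          = (∑ v : P, w' v * C v) + (M - t') * ∑ v ∈ Y, C v := by
        have : ∀ v : P, w v * C v = w' v * C v + (M - t') * (if v ∈ Y then C v else 0) := by
          intro v
          rw [hwdec v]
          by_cases h : v ∈ Y <;> simp [h] <;> ring
        rw [Finset.sum_congr rfl fun v _ => this v, Finset.sum_add_distrib, ← Finset.mul_sum,
          Finset.sum_ite_mem, Finset.univ_inter]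
      have hsumI : ∑ e : I, cI e * (Ie e).inf' (hIe e) w
          = (∑ e : I, cI e * (Ie e).inf' (hIe e) w')
            + (M - t') * ∑ e ∈ Finset.univ.filter (fun e : I => Ie e ⊆ Y), cI e := by
        have : ∀ e : I, cI e * (Ie e).inf' (hIe e) w
            = cI e * (Ie e).inf' (hIe e) w' + (M - t') * (if Ie e ⊆ Y then cI e else 0) := by
          intro e
          rw [hinf e]
          by_cases h : Ie e ⊆ Y <;> simp [h] <;> ring
        rw [Finset.sum_congr rfl fun e _ => this e, Finset.sum_add_distrib, ← Finset.mul_sum,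
          ← Finset.sum_filter]
      have hsumS : ∑ e : S, cS e * (Se e).sup' (hSe e) w
          = (∑ e : S, cS e * (Se e).sup' (hSe e) w')
            + (M - t') * ∑ e ∈ Finset.univ.filter (fun e : S => (Se e ∩ Y).Nonempty), cS e := by
        have : ∀ e : S, cS e * (Se e).sup' (hSe e) w
            = cS e * (Se e).sup' (hSe e) w' + (M - t') * (if (Se e ∩ Y).Nonempty then cS e else 0) := by
          intro e
          rw [hsup e]
          by_cases h : (Se e ∩ Y).Nonempty <;> simp [h] <;> ring
        rw [Finset.sum_congr rfl fun e _ => this e, Finset.sum_add_distrib, ← Finset.mul_sum,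
          ← Finset.sum_filter]
      have hIH := IH w' hcard
      have hlowY := hlow Y hYne
      have hpos : (0:ℝ) ≤ M - t' := le_of_lt (sub_pos.2 ht'M)
      rw [hsumw, hsumI, hsumS]
      have := mul_le_mul_of_nonneg_left hlowY hpos
      linarith

/-- A linear order on `P` sorting by the weights `w` (ascending, ties broken arbitrarily). -/
def wOrder {P : Type} [Fintype P] (w : P → ℝ) : LinearOrder P :=
  LinearOrder.lift' (fun v => toLex (w v, Fintype.equivFin P v))
    (fun a b h => by
      have := congrArg (fun x => (ofLex x).2) h
      simpa using (Fintype.equivFin P).injective this)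

lemma wOrder_le {P : Type} [Fintype P] (w : P → ℝ) {a b : P}
    (h : @LE.le P (wOrder w).toLE a b) : w a ≤ w b := by
  have h' : toLex (w a, Fintype.equivFin P a) ≤ toLex (w b, Fintype.equivFin P b) := h
  rcases (Prod.Lex.le_iff).1 h' with h1 | h1
  · exact le_of_lt h1
  · exact le_of_eq h1.1

lemma wOrder_min' {P : Type} [Fintype P] (w : P → ℝ) (X : Finset P) (hX : X.Nonempty) :
    w (@Finset.min' P (wOrder w) X hX) = X.inf' hX w := by
  apply le_antisymm
  · apply Finset.le_inf'
    intro b hb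
    exact wOrder_le w (@Finset.min'_le P (wOrder w) X b hb)
  · exact Finset.inf'_le w (@Finset.min'_mem P (wOrder w) X hX)

lemma wOrder_max' {P : Type} [Fintype P] (w : P → ℝ) (X : Finset P) (hX : X.Nonempty) :
    w (@Finset.max' P (wOrder w) X hX) = X.sup' hX w := by
  apply le_antisymm
  · apply Finset.le_sup' w (@Finset.max'_mem P (wOrder w) X hX)
  · apply Finset.sup'_le
    intro b hb
    exact wOrder_le w (@Finset.le_max' P (wOrder w) X b hb)

lemma filter_ext {α : Type} (p q : α → Prop) (h1 : DecidablePred p) (h2 : DecidablePred q)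
    (s : Finset α) (h : ∀ e, p e ↔ q e) :
    @Finset.filter α p h1 s = @Finset.filter α q h2 s := by
  ext x
  simp only [Finset.mem_filter]
  exact and_congr_right fun _ => h x



/-- The allocation vector induced by a linear order `π` on `P`:
each supply edge `e ∈ I` gives `c_e` to the `π`-minimum vertex of `I_e`, and
each demand edge `e ∈ S` takes `c_e` from the `π`-maximum vertex of `S_e`. -/
def allocVec {P I S : Type} [Fintype P] [Fintype I] [Fintype S]
    (cI : I → ℝ) (Ie : I → Finset P) (hIe : ∀ e, (Ie e).Nonempty)
    (cS : S → ℝ) (Se : S → Finset P) (hSe : ∀ e, (Se e).Nonempty)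
    (π : LinearOrder P) (v : P) : ℝ :=
  (∑ e ∈ Finset.univ.filter (fun e : I => v = @Finset.min' P π (Ie e) (hIe e)), cI e)
  - (∑ e ∈ Finset.univ.filter (fun e : S => v = @Finset.max' P π (Se e) (hSe e)), cS e)

/-- any target allocation `C` satisfying the conservation constraint
and the lower/upper bound constraints for every nonempty subset lies in the convex
hull of the allocation vectors induced by linear orders on `P`. -/
theorem target_in_convexHull_of_bounds
    (P I S : Type) [Fintype P] [DecidableEq P] [Nonempty P] [Fintype I] [Fintype S]
    (cI : I → ℝ) (hcI : ∀ e, 0 < cI e) (Ie : I → Finset P) (hIe : ∀ e, (Ie e).Nonempty)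
    (cS : S → ℝ) (hcS : ∀ e, 0 < cS e) (Se : S → Finset P) (hSe : ∀ e, (Se e).Nonempty)
    (C : P → ℝ)
    (hsum : ∑ v : P, C v = (∑ e : I, cI e) - ∑ e : S, cS e)
    (hlow : ∀ Y : Finset P, Y.Nonempty →
      (∑ e ∈ Finset.univ.filter (fun e : I => Ie e ⊆ Y), cI e)
        - (∑ e ∈ Finset.univ.filter (fun e : S => (Se e ∩ Y).Nonempty), cS e)
        ≤ ∑ v ∈ Y, C v)
    (hup : ∀ Y : Finset P, Y.Nonempty →
      (∑ v ∈ Y, C v)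
        ≤ (∑ e ∈ Finset.univ.filter (fun e : I => (Ie e ∩ Y).Nonempty), cI e)
          - (∑ e ∈ Finset.univ.filter (fun e : S => Se e ⊆ Y), cS e)) :
    C ∈ convexHull ℝ
      {g : P → ℝ | ∃ π : LinearOrder P, g = allocVec cI Ie hIe cS Se hSe π} := by
  
  have hkey : ∀ (w : P → ℝ),
      (∑ e : I, cI e * (Ie e).inf' (hIe e) w) - (∑ e : S, cS e * (Se e).sup' (hSe e) w)
        ≤ ∑ v : P, w v * C v :=
    fun w => key_ineq cI Ie hIe cS Se hSe C hsum hlow (Finset.univ.image w).card w le_rfl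
  set G : Set (P → ℝ) := {g : P → ℝ | ∃ π : LinearOrder P, g = allocVec cI Ie hIe cS Se hSe π}
    with hG
  have hGfin : G.Finite := by
    apply Set.Finite.subset (Set.finite_range (fun p : (I → P) × (S → P) => fun v : P =>
        (∑ e ∈ Finset.univ.filter (fun e : I => v = p.1 e), cI e)
        - (∑ e ∈ Finset.univ.filter (fun e : S => v = p.2 e), cS e)))
    rintro g ⟨π, rfl⟩
    refine ⟨(fun e => @Finset.min' P π (Ie e) (hIe e),
            fun e => @Finset.max' P π (Se e) (hSe e)), ?_⟩
    funext v
    beta_reduce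
    unfold allocVec
    congr 1
    · exact Finset.sum_congr (filter_ext _ _ _ _ _ fun e => Iff.rfl) fun _ _ => rfl
    · exact Finset.sum_congr (filter_ext _ _ _ _ _ fun e => Iff.rfl) fun _ _ => rfl
  by_contra hC
  obtain ⟨f, u, hfC, hfb⟩ := geometric_hahn_banach_point_closed
    (convex_convexHull ℝ G) (hGfin.isClosed_convexHull (𝕜 := ℝ)) hC
  set w : P → ℝ := fun v => f (fun j => if v = j then 1 else 0) with hwdef
  have hf : ∀ x : P → ℝ, f x = ∑ v : P, x v * w v := by
    intro x
    conv_lhs => rw [pi_eq_sum_univ x, map_sum]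
    refine Finset.sum_congr rfl fun v _ => ?_
    rw [map_smul]
    rw [smul_eq_mul]
  set π : LinearOrder P := wOrder w with hπ
  set g : P → ℝ := allocVec cI Ie hIe cS Se hSe π with hgdef
  have hgG : g ∈ convexHull ℝ G := subset_convexHull ℝ G ⟨π, rfl⟩
  have hfg : f g = (∑ e : I, cI e * (Ie e).inf' (hIe e) w)
      - (∑ e : S, cS e * (Se e).sup' (hSe e) w) := by
    rw [hf g]
    have hone : ∀ (c : ℝ) (m : P),
        (∑ v : P, @ite ℝ (v = m) (@LinearOrder.toDecidableEq P π v m) (c * w v) 0) = c * w m := by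
      intro c m
      rw [Finset.sum_eq_single m (fun b _ hb => by rw [if_neg hb])
        (fun h => absurd (Finset.mem_univ m) h), if_pos rfl]
    have h1 : ∀ v : P, g v * w v
        = (∑ e : I, @ite ℝ (v = @Finset.min' P π (Ie e) (hIe e))
              (@LinearOrder.toDecidableEq P π v _) (cI e * w v) 0)
          - (∑ e : S, @ite ℝ (v = @Finset.max' P π (Se e) (hSe e))
              (@LinearOrder.toDecidableEq P π v _) (cS e * w v) 0) := by
      intro v
      rw [hgdef]
      unfold allocVec
      rw [sub_mul, Finset.sum_mul, Finset.sum_mul, Finset.sum_filter, Finset.sum_filter]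
    rw [Finset.sum_congr rfl fun v _ => h1 v, Finset.sum_sub_distrib]
    congr 1
    · rw [Finset.sum_comm]
      refine Finset.sum_congr rfl fun e _ => ?_
      rw [hone (cI e) (@Finset.min' P π (Ie e) (hIe e)), hπ, wOrder_min' w (Ie e) (hIe e)]
    · rw [Finset.sum_comm]
      refine Finset.sum_congr rfl fun e _ => ?_
      rw [hone (cS e) (@Finset.max' P π (Se e) (hSe e)), hπ, wOrder_max' w (Se e) (hSe e)]
  have hfCval : f C = ∑ v : P, w v * C v := by
    rw [hf C]
    exact Finset.sum_congr rfl fun v _ => mul_comm _ _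
  have h1 : f g ≤ f C := by
    rw [hfg, hfCval]
    exact hkey w
  exact absurd (hfb g hgG) (not_lt.2 (h1.trans (le_of_lt hfC)))
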